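/- Under the multiplicative update p^{t+1}_i = p^t_i * ( ∑_k (Ξ^k p^t)_i / ( ((p^t)ᵀ Ξ^k p^t) * (Ψ p^t)_i ) )^{1/2}, the objective f(p) = -∑_k ln(pᵀ Ξ^k p) + pᵀ Ψ p is non-increasing: f(p^{t+1}) ≤ f(p^t). -/

import Mathlib

open Finset

theorem multiplicative_update_decreases_objective {n K : ℕ}
    (Ξ : Fin K → Matrix (Fin n) (Fin n) ℝ)
    (hΞsymm : ∀ k, (Ξ k).IsSymm) (hΞpos : ∀ k i j, 0 < Ξ k i j)
    (Ψ : Matrix (Fin n) (Fin n) ℝ) (hΨsymm : Ψ.IsSymm) (hΨpos : ∀ i j, 0 < Ψ i j)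
    (pt : Fin n → ℝ) (hpt : ∀ i, 0 < pt i)
    (pnext : Fin n → ℝ)
    (hupd : ∀ i, pnext i = pt i *
        (∑ k, (∑ j, Ξ k i j * pt j) /
          ((∑ i', ∑ j, pt i' * Ξ k i' j * pt j) * (∑ j, Ψ i j * pt j))) ^ ((1 : ℝ) / 2))
    (f : (Fin n → ℝ) → ℝ)
    (hf : ∀ p, f p = -∑ k, Real.log (∑ i, ∑ j, p i * Ξ k i j * p j) +
        ∑ i, ∑ j, p i * Ψ i j * p j) :
    f pnext ≤ f pt := by
  rcases Nat.eq_zero_or_pos n with hn | hn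
  · subst hn
    simp [hf]
  have hFn : (Finset.univ : Finset (Fin n)).Nonempty := ⟨⟨0, hn⟩, Finset.mem_univ _⟩
  set s : Fin K → ℝ := fun k => ∑ i', ∑ j, pt i' * Ξ k i' j * pt j with hs_def
  have hs : ∀ k, 0 < s k := fun k =>
    Finset.sum_pos (fun i _ => Finset.sum_pos
      (fun j _ => mul_pos (mul_pos (hpt i) (hΞpos k i j)) (hpt j)) hFn) hFn
  set a : Fin K → Fin n → ℝ := fun k i => ∑ j, Ξ k i j * pt j with ha_def
  have ha : ∀ k i, 0 < a k i := fun k i =>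
    Finset.sum_pos (fun j _ => mul_pos (hΞpos k i j) (hpt j)) hFn
  set b : Fin n → ℝ := fun i => ∑ j, Ψ i j * pt j with hb_def
  have hb : ∀ i, 0 < b i := fun i =>
    Finset.sum_pos (fun j _ => mul_pos (hΨpos i j) (hpt j)) hFn
  set c : Fin n → ℝ := fun i => ∑ k, pt i * a k i / s k with hc_def
  set d : Fin n → ℝ := fun i => b i / pt i with hd_def
  have hd : ∀ i, 0 < d i := fun i => div_pos (hb i) (hpt i)
  have hc0 : ∀ i, 0 ≤ c i := fun i =>
    Finset.sum_nonneg fun k _ => le_of_lt (div_pos (mul_pos (hpt i) (ha k i)) (hs k))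
  have hupd2 : ∀ i, pnext i = pt i * (∑ k, a k i / (s k * b i)) ^ ((1 : ℝ) / 2) := hupd
  have hrn : ∀ i, 0 ≤ ∑ k, a k i / (s k * b i) := fun i =>
    Finset.sum_nonneg fun k _ => le_of_lt (div_pos (ha k i) (mul_pos (hs k) (hb i)))
  have hpn0 : ∀ i, 0 ≤ pnext i := fun i => by
    rw [hupd2 i]
    exact mul_nonneg (hpt i).le (Real.rpow_nonneg (hrn i) _)
  have hr : ∀ i, c i / d i = pt i ^ 2 * ∑ k, a k i / (s k * b i) := by
    intro i
    rw [hc_def, hd_def]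
    simp only
    rw [Finset.sum_div, Finset.mul_sum]
    refine Finset.sum_congr rfl fun k _ => ?_
    have h1 := (hs k).ne'
    have h2 := (hb i).ne'
    have h3 := (hpt i).ne'
    field_simp
  have hpow : ∀ x : ℝ, 0 ≤ x → (x ^ ((1 : ℝ) / 2)) ^ 2 = x := by
    intro x hx
    rw [← Real.rpow_natCast (x ^ ((1 : ℝ) / 2)) 2, ← Real.rpow_mul hx]
    norm_num
  have hpnsq : ∀ i, pnext i ^ 2 = c i / d i := by
    intro i
    rw [hupd2 i, mul_pow, hpow _ (hrn i), hr i]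
  -- the surrogate
  set L : (Fin n → ℝ) → ℝ := fun p => ∑ i, c i * Real.log (p i / pt i) with hL_def
  set G : (Fin n → ℝ) → ℝ :=
    fun p => (-∑ k, Real.log (s k)) - 2 * L p + ∑ i, d i * p i ^ 2 with hG_def
  -- Step 3 : G pt = f pt
  have step3 : G pt = f pt := by
    rw [hG_def, hf pt]
    simp only
    have h1 : L pt = 0 := by
      rw [hL_def]
      simp only
      refine Finset.sum_eq_zero fun i _ => ?_
      rw [div_self (hpt i).ne', Real.log_one, mul_zero]
    have h2 : ∑ i, d i * pt i ^ 2 = ∑ i, ∑ j, pt i * Ψ i j * pt j := by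
      refine Finset.sum_congr rfl fun i _ => ?_
      have : d i * pt i ^ 2 = pt i * b i := by
        have := (hpt i).ne'
        rw [hd_def]; field_simp
      rw [this, hb_def]
      simp only
      rw [Finset.mul_sum]
      exact Finset.sum_congr rfl fun j _ => by ring
    rw [h1, h2]
    ring
  -- Step 2 : G pnext ≤ G pt
  have step2 : G pnext ≤ G pt := by
    have key2 : ∀ i, d i * pnext i ^ 2 - 2 * (c i * Real.log (pnext i / pt i)) ≤
        d i * pt i ^ 2 - 2 * (c i * Real.log (pt i / pt i)) := by
      intro i
      rw [div_self (hpt i).ne', Real.log_one, mul_zero, mul_zero, sub_zero]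
      rcases eq_or_lt_of_le (hc0 i) with hci | hci
      · have hz : pnext i ^ 2 = 0 := by rw [hpnsq i, ← hci, zero_div]
        rw [hz, ← hci]
        have : 0 < d i * pt i ^ 2 := mul_pos (hd i) (pow_pos (hpt i) 2)
        simp
        nlinarith
      · have hA : 0 < c i := hci
        have hB : 0 < d i * pt i ^ 2 := mul_pos (hd i) (pow_pos (hpt i) 2)
        have hpn2 : 0 < pnext i ^ 2 := by rw [hpnsq i]; exact div_pos hA (hd i)
        have hpnne : pnext i ≠ 0 := fun h => by rw [h] at hpn2; norm_num at hpn2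
        have hpnpos : 0 < pnext i := lt_of_le_of_ne (hpn0 i) (Ne.symm hpnne)
        have hAB : (pnext i / pt i) ^ 2 = c i / (d i * pt i ^ 2) := by
          rw [div_pow, hpnsq i, div_div]
        have hlog : (2 : ℝ) * Real.log (pnext i / pt i) = Real.log (c i / (d i * pt i ^ 2)) := by
          rw [← hAB, Real.log_pow]
          push_cast; ring
        have h1 : Real.log ((d i * pt i ^ 2) / c i) ≤ (d i * pt i ^ 2) / c i - 1 :=
          Real.log_le_sub_one_of_pos (div_pos hB hA)
        have h2 : Real.log ((d i * pt i ^ 2) / c i) = -(2 * Real.log (pnext i / pt i)) := by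
          rw [hlog, ← Real.log_inv, inv_div]
        have h3 : c i * ((d i * pt i ^ 2) / c i - 1) = d i * pt i ^ 2 - c i := by
          have := hA.ne'
          field_simp
        have h4 : c i * Real.log ((d i * pt i ^ 2) / c i) ≤ d i * pt i ^ 2 - c i := by
          calc c i * Real.log ((d i * pt i ^ 2) / c i) ≤ c i * ((d i * pt i ^ 2) / c i - 1) :=
                mul_le_mul_of_nonneg_left h1 hA.le
            _ = d i * pt i ^ 2 - c i := h3
        have h5 : d i * pnext i ^ 2 = c i := by
          have := (hd i).ne'
          rw [hpnsq i]; field_simp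
        rw [h2] at h4
        linarith
    have hsum := Finset.sum_le_sum fun i (_ : i ∈ Finset.univ) => key2 i
    rw [Finset.sum_sub_distrib, Finset.sum_sub_distrib, ← Finset.mul_sum, ← Finset.mul_sum]
      at hsum
    rw [hG_def, hL_def]
    simp only
    linarith
  -- Step 1 : f pnext ≤ G pnext
  have step1 : f pnext ≤ G pnext := by
    -- quadratic part
    have hBq : ∑ i, ∑ j, pnext i * Ψ i j * pnext j ≤ ∑ i, d i * pnext i ^ 2 := by
      have key : ∀ i j, pnext i * Ψ i j * pnext j ≤
          (pnext i ^ 2 / (2 * pt i)) * (Ψ i j * pt j) +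
          (pnext j ^ 2 / (2 * pt j)) * (Ψ j i * pt i) := by
        intro i j
        have hpi := hpt i
        have hpj := hpt j
        have hψ := hΨpos i j
        have hsym : Ψ j i = Ψ i j := hΨsymm.apply i j
        rw [hsym]
        rw [div_mul_eq_mul_div, div_mul_eq_mul_div,
          div_add_div _ _ (by positivity : (2 * pt i : ℝ) ≠ 0) (by positivity : (2 * pt j : ℝ) ≠ 0),
          le_div_iff₀ (by positivity)]
        nlinarith [sq_nonneg (pnext i * pt j - pnext j * pt i), mul_pos hpi hpj, hψ.le]
      calc ∑ i, ∑ j, pnext i * Ψ i j * pnext j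
          ≤ ∑ i, ∑ j, ((pnext i ^ 2 / (2 * pt i)) * (Ψ i j * pt j) +
              (pnext j ^ 2 / (2 * pt j)) * (Ψ j i * pt i)) :=
            Finset.sum_le_sum fun i _ => Finset.sum_le_sum fun j _ => key i j
        _ = ∑ i, d i * pnext i ^ 2 := by
            simp only [Finset.sum_add_distrib]
            have e1 : ∑ i, ∑ j, (pnext i ^ 2 / (2 * pt i)) * (Ψ i j * pt j)
                = ∑ i, (pnext i ^ 2 / (2 * pt i)) * b i := by
              refine Finset.sum_congr rfl fun i _ => ?_
              rw [hb_def, ← Finset.mul_sum]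
            have e2 : ∑ i, ∑ j, (pnext j ^ 2 / (2 * pt j)) * (Ψ j i * pt i)
                = ∑ j, (pnext j ^ 2 / (2 * pt j)) * b j := by
              rw [Finset.sum_comm]
              refine Finset.sum_congr rfl fun j _ => ?_
              rw [hb_def, ← Finset.mul_sum]
            rw [e1, e2, ← Finset.sum_add_distrib]
            refine Finset.sum_congr rfl fun i _ => ?_
            have h1 := (hpt i).ne'
            rw [hd_def]
            field_simp
            ring
    -- log part : per-k Jensen
    have hAk : ∀ k, Real.log (s k) + 2 * ∑ i, (pt i * a k i / s k) * Real.log (pnext i / pt i)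
        ≤ Real.log (∑ i, ∑ j, pnext i * Ξ k i j * pnext j) := by
      intro k
      have hK : 0 < K := k.pos
      have hpn : ∀ i, 0 < pnext i := by
        intro i
        rw [hupd2 i]
        refine mul_pos (hpt i) (Real.rpow_pos_of_pos ?_ _)
        exact Finset.sum_pos (fun k' _ => div_pos (ha k' i) (mul_pos (hs k') (hb i)))
          ⟨⟨0, hK⟩, Finset.mem_univ _⟩
      set w : Fin n × Fin n → ℝ := fun q => pt q.1 * Ξ k q.1 q.2 * pt q.2 / s k with hw_def
      set x : Fin n × Fin n → ℝ :=
        fun q => (pnext q.1 / pt q.1) * ((pnext q.2 / pt q.2) * s k) with hx_def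
      have hw0 : ∀ q ∈ (Finset.univ : Finset (Fin n × Fin n)), 0 ≤ w q := fun q _ =>
        le_of_lt (div_pos (mul_pos (mul_pos (hpt q.1) (hΞpos k q.1 q.2)) (hpt q.2)) (hs k))
      have hw1 : ∑ q, w q = 1 := by
        rw [hw_def]
        simp only
        rw [← Finset.sum_div, Fintype.sum_prod_type]
        exact div_self (hs k).ne'
      have hxpos : ∀ q, 0 < x q := fun q =>
        mul_pos (div_pos (hpn q.1) (hpt q.1))
          (mul_pos (div_pos (hpn q.2) (hpt q.2)) (hs k))
      have hxmem : ∀ q ∈ (Finset.univ : Finset (Fin n × Fin n)), x q ∈ Set.Ioi (0 : ℝ) :=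
        fun q _ => hxpos q
      have hJ := (strictConcaveOn_log_Ioi.concaveOn).le_map_sum hw0 hw1 hxmem
      simp only [smul_eq_mul] at hJ
      have hwx : ∑ q, w q * x q = ∑ i, ∑ j, pnext i * Ξ k i j * pnext j := by
        rw [Fintype.sum_prod_type]
        refine Finset.sum_congr rfl fun i _ => Finset.sum_congr rfl fun j _ => ?_
        rw [hw_def, hx_def]
        simp only
        have h1 := (hs k).ne'
        have h2 := (hpt i).ne'
        have h3 := (hpt j).ne'
        field_simp
      have hlx : ∀ q : Fin n × Fin n, Real.log (x q) =
          Real.log (pnext q.1 / pt q.1) + Real.log (pnext q.2 / pt q.2) + Real.log (s k) := by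
        intro q
        rw [hx_def]
        simp only
        rw [Real.log_mul (div_pos (hpn q.1) (hpt q.1)).ne'
            (mul_pos (div_pos (hpn q.2) (hpt q.2)) (hs k)).ne',
          Real.log_mul (div_pos (hpn q.2) (hpt q.2)).ne' (hs k).ne']
        ring
      have hw_row : ∀ i, ∑ j, w (i, j) = pt i * a k i / s k := by
        intro i
        rw [hw_def, ha_def]
        simp only
        rw [← Finset.sum_div, Finset.mul_sum]
        congr 1
        exact Finset.sum_congr rfl fun j _ => by ring
      have hw_col : ∀ j, ∑ i, w (i, j) = pt j * a k j / s k := by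
        intro j
        rw [hw_def, ha_def]
        simp only
        rw [← Finset.sum_div, Finset.mul_sum]
        congr 1
        refine Finset.sum_congr rfl fun i _ => ?_
        rw [(hΞsymm k).apply j i]
        ring
      have hsum_logs : ∑ q, w q * Real.log (x q) =
          2 * ∑ i, (pt i * a k i / s k) * Real.log (pnext i / pt i) + Real.log (s k) := by
        calc ∑ q, w q * Real.log (x q)
            = ∑ q : Fin n × Fin n, (w q * Real.log (pnext q.1 / pt q.1) +
                w q * Real.log (pnext q.2 / pt q.2) + w q * Real.log (s k)) := by
              refine Finset.sum_congr rfl fun q _ => ?_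
              rw [hlx q]; ring
          _ = (∑ q : Fin n × Fin n, w q * Real.log (pnext q.1 / pt q.1)) +
              (∑ q : Fin n × Fin n, w q * Real.log (pnext q.2 / pt q.2)) +
              (∑ q : Fin n × Fin n, w q * Real.log (s k)) := by
              rw [Finset.sum_add_distrib, Finset.sum_add_distrib]
          _ = 2 * ∑ i, (pt i * a k i / s k) * Real.log (pnext i / pt i) + Real.log (s k) := by
              have p1 : ∑ q : Fin n × Fin n, w q * Real.log (pnext q.1 / pt q.1)
                  = ∑ i, (pt i * a k i / s k) * Real.log (pnext i / pt i) := by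
                rw [Fintype.sum_prod_type]
                refine Finset.sum_congr rfl fun i _ => ?_
                simp only [Prod.fst, Prod.snd]
                rw [← Finset.sum_mul, hw_row i]
              have p2 : ∑ q : Fin n × Fin n, w q * Real.log (pnext q.2 / pt q.2)
                  = ∑ j, (pt j * a k j / s k) * Real.log (pnext j / pt j) := by
                rw [Fintype.sum_prod_type, Finset.sum_comm]
                refine Finset.sum_congr rfl fun j _ => ?_
                simp only [Prod.fst, Prod.snd]
                rw [← Finset.sum_mul, hw_col j]
              have p3 : ∑ q : Fin n × Fin n, w q * Real.log (s k) = Real.log (s k) := by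
                rw [← Finset.sum_mul, hw1, one_mul]
              rw [p1, p2, p3]
              ring
      rw [hwx, hsum_logs] at hJ
      linarith
    have hAsum := Finset.sum_le_sum fun k (_ : k ∈ Finset.univ) => hAk k
    rw [Finset.sum_add_distrib, ← Finset.mul_sum] at hAsum
    have hswap : ∑ k, ∑ i, (pt i * a k i / s k) * Real.log (pnext i / pt i) = L pnext := by
      rw [hL_def]
      simp only
      rw [Finset.sum_comm]
      refine Finset.sum_congr rfl fun i _ => ?_
      rw [hc_def]
      simp only
      rw [Finset.sum_mul]
    rw [hswap] at hAsum
    rw [hf pnext, hG_def]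
    simp only
    linarith
  linarith
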